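/- Let U be a random variable in [0,1] with P[U ≤ u] ≤ u for all u ∈ [0,1] (superuniform). Then for α ∈ (0,1) and γ_min ∈ (0,1), E[sup_{γ ∈ (γ_min,1)} 1{U ≤ αγ}/γ] ≤ α(1 − log γ_min). -/

import Mathlib

open MeasureTheory

open Set


lemma sup_eval {α γmin : ℝ} (hα : α ∈ Set.Ioo (0:ℝ) 1) (hγ : γmin ∈ Set.Ioo (0:ℝ) 1)
    (u : ℝ) :
    sSup ((fun γ => (if u ≤ α * γ then (1:ℝ) else 0) / γ) '' Set.Ioo γmin 1)
      = if α ≤ u then 0 else if u ≤ α * γmin then 1/γmin else α/u := by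
  obtain ⟨hα0, hα1⟩ := hα
  obtain ⟨hγ0, hγ1⟩ := hγ
  have hne : (Set.Ioo γmin 1).Nonempty := Set.nonempty_Ioo.2 hγ1
  rcases le_or_gt α u with h1 | h1
  · rw [if_pos h1]
    have hz : ∀ γ ∈ Set.Ioo γmin 1, (if u ≤ α * γ then (1:ℝ) else 0) / γ = (fun _ : ℝ => (0:ℝ)) γ := by
      intro γ hm
      have h2 : α * γ < α := mul_lt_of_lt_one_right hα0 hm.2
      simp only
      rw [if_neg (by linarith), zero_div]
    rw [Set.image_congr hz, Set.Nonempty.image_const hne 0, csSup_singleton]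
  · rw [if_neg (not_le.2 h1)]
    by_cases h2 : u ≤ α * γmin
    · rw [if_pos h2]
      apply IsLUB.csSup_eq _ (hne.image _)
      constructor
      · rintro x ⟨γ, hm, rfl⟩
        have : α * γmin < α * γ := by nlinarith [hm.1]
        simp only
        rw [if_pos (by linarith)]
        have hγpos : 0 < γ := lt_trans hγ0 hm.1
        rw [one_div, one_div]
        exact inv_anti₀ hγ0 hm.1.le
      · intro b hb
        by_contra hlt
        push_neg at hlt
        have hval : ∀ γ ∈ Set.Ioo γmin 1, 1/γ ≤ b := by
          intro γ hm
          have : α * γmin < α * γ := by nlinarith [hm.1]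
          have := hb ⟨γ, hm, rfl⟩
          simp only at this
          rwa [if_pos (by linarith)] at this
        have hb0 : 0 < b := by
          have h := hval ((γmin+1)/2) ⟨by linarith, by linarith⟩
          have : (0:ℝ) < 1 / ((γmin+1)/2) := by positivity
          linarith
        have hγb : γmin < 1/b := by
          rw [lt_div_iff₀ hb0]
          calc γmin * b < γmin * (1/γmin) := by
                exact mul_lt_mul_of_pos_left hlt hγ0
            _ = 1 := by field_simp
        set c := min (1/b) 1 with hc
        have hγc : γmin < c := lt_min hγb hγ1
        set γ := (γmin + c)/2 with hγdef
        have hγm : γ ∈ Set.Ioo γmin 1 := by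
          constructor
          · simp only [hγdef]; linarith
          · have : c ≤ 1 := min_le_right _ _
            simp only [hγdef]; linarith
        have hγlt : γ < 1/b := by
          have : c ≤ 1/b := min_le_left _ _
          simp only [hγdef]; linarith
        have hγpos : 0 < γ := lt_trans hγ0 hγm.1
        have : b < 1/γ := by
          rw [lt_div_iff₀ hγpos]
          calc b * γ < b * (1/b) := mul_lt_mul_of_pos_left hγlt hb0
            _ = 1 := by field_simp
        linarith [hval γ hγm]
    · rw [if_neg h2]
      push_neg at h2
      have hu0 : 0 < u := lt_trans (by positivity) h2
      set c := u / α with hc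
      have hc1 : c < 1 := (div_lt_one hα0).2 h1
      have hcm : γmin < c := by
        rw [hc, lt_div_iff₀ hα0]; linarith [h2]
      apply IsGreatest.csSup_eq
      constructor
      · refine ⟨c, ⟨hcm, hc1⟩, ?_⟩
        have hcu : α * c = u := by rw [hc]; field_simp
        simp only
        rw [if_pos hcu.ge, hc, one_div_div]
      · rintro x ⟨γ, hm, rfl⟩
        have hγpos : 0 < γ := lt_trans hγ0 hm.1
        simp only
        split_ifs with h
        · rw [div_le_div_iff₀ hγpos hu0]
          nlinarith
        · rw [zero_div]; positivity

lemma integral_inv_sq {a : ℝ} (ha : 0 < a) (ha1 : a ≤ 1) :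
    ∫ s in Set.Ioo a 1, (1:ℝ)/s^2 = 1/a - 1 := by
  rw [← MeasureTheory.integral_Ioc_eq_integral_Ioo, ← intervalIntegral.integral_of_le ha1]
  have h0 : (0:ℝ) ∉ Set.uIcc a 1 := by
    rw [Set.uIcc_of_le ha1]
    rintro ⟨h, -⟩; linarith
  have heq : ∀ s ∈ Set.uIcc a 1, (1:ℝ)/s^2 = s^(-2:ℤ) := by
    intro s hs
    rw [zpow_neg, one_div]
    norm_cast
  rw [intervalIntegral.integral_congr heq,
    integral_zpow (Or.inr ⟨by norm_num, h0⟩)]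
  norm_num
  ring

lemma g_eq {α γmin : ℝ} (hα : α ∈ Set.Ioo (0:ℝ) 1) (hγ : γmin ∈ Set.Ioo (0:ℝ) 1)
    (u : ℝ) :
    (if α ≤ u then (0:ℝ) else if u ≤ α * γmin then 1/γmin else α/u)
      = (if u < α then (1:ℝ) else 0)
        + ∫ s in Set.Ioc γmin 1, (if u ≤ α * s then (1:ℝ) else 0)/s^2 := by
  obtain ⟨hα0, hα1⟩ := hα
  obtain ⟨hγ0, hγ1⟩ := hγ
  rw [MeasureTheory.integral_Ioc_eq_integral_Ioo]
  have hmf : Measurable fun s : ℝ => (if u ≤ α * s then (1:ℝ) else 0)/s^2 :=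
    (Measurable.ite (measurableSet_le measurable_const (measurable_const.mul measurable_id))
      measurable_const measurable_const).div (measurable_id.pow_const 2)
  have hIntOn : IntegrableOn (fun s => (if u ≤ α * s then (1:ℝ) else 0)/s^2)
      (Set.Ioo γmin 1) := by
    have hcont : ContinuousOn (fun s : ℝ => 1/s^2) (Set.Icc γmin 1) := by
      apply ContinuousOn.div continuousOn_const (continuousOn_pow 2)
      intro s hs
      have : 0 < s := lt_of_lt_of_le hγ0 hs.1
      positivity
    have hg : IntegrableOn (fun s : ℝ => 1/s^2) (Set.Ioo γmin 1) :=
      (hcont.integrableOn_Icc).mono_set Set.Ioo_subset_Icc_self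
    apply hg.mono' hmf.aestronglyMeasurable.restrict
    apply Filter.Eventually.of_forall
    intro s
    rw [Real.norm_eq_abs, abs_div, abs_of_nonneg (by positivity : (0:ℝ) ≤ s^2)]
    gcongr
    split_ifs <;> simp
  rcases le_or_gt α u with h1 | h1
  · rw [if_pos h1, if_neg (not_lt.2 h1)]
    have hz : Set.EqOn (fun s => (if u ≤ α * s then (1:ℝ) else 0)/s^2) (fun _ => (0:ℝ))
        (Set.Ioo γmin 1) := by
      intro s hs
      have h2 : α * s < α := mul_lt_of_lt_one_right hα0 hs.2
      simp only
      rw [if_neg (by linarith), zero_div]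
    rw [MeasureTheory.setIntegral_congr_fun measurableSet_Ioo hz]
    simp
  · rw [if_neg (not_le.2 h1)]
    by_cases h2 : u ≤ α * γmin
    · rw [if_pos h2, if_pos h1]
      have hone : Set.EqOn (fun s => (if u ≤ α * s then (1:ℝ) else 0)/s^2)
          (fun s => (1:ℝ)/s^2) (Set.Ioo γmin 1) := by
        intro s hs
        have : α * γmin < α * s := by nlinarith [hs.1]
        simp only
        rw [if_pos (by linarith)]
      rw [MeasureTheory.setIntegral_congr_fun measurableSet_Ioo hone,
        integral_inv_sq hγ0 hγ1.le]
      ring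
    · rw [if_neg h2, if_pos h1]
      push_neg at h2
      have hu0 : 0 < u := lt_trans (by positivity) h2
      set c := u / α with hc
      have hc1 : c < 1 := (div_lt_one hα0).2 h1
      have hcm : γmin < c := by rw [hc, lt_div_iff₀ hα0]; linarith
      have hc0 : 0 < c := lt_trans hγ0 hcm
      have hcu : α * c = u := by rw [hc]; field_simp
      have hsplit : Set.Ioo γmin 1 = Set.Ioo γmin c ∪ Set.Ico c 1 :=
        (Set.Ioo_union_Ico_eq_Ioo hcm hc1.le).symm
      have hdisj : Disjoint (Set.Ioo γmin c) (Set.Ico c 1) := by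
        apply Set.disjoint_left.2
        intro x hx hx'
        exact absurd hx.2 (not_lt.2 hx'.1)
      rw [hsplit, MeasureTheory.setIntegral_union hdisj measurableSet_Ico
        (hIntOn.mono_set (by rw [hsplit]; exact Set.subset_union_left))
        (hIntOn.mono_set (by rw [hsplit]; exact Set.subset_union_right))]
      have hz : Set.EqOn (fun s => (if u ≤ α * s then (1:ℝ) else 0)/s^2) (fun _ => (0:ℝ))
          (Set.Ioo γmin c) := by
        intro s hs
        have : α * s < α * c := by nlinarith [hs.2]
        simp only
        rw [if_neg (by linarith), zero_div]
      have hone : Set.EqOn (fun s => (if u ≤ α * s then (1:ℝ) else 0)/s^2)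
          (fun s => (1:ℝ)/s^2) (Set.Ico c 1) := by
        intro s hs
        have : α * c ≤ α * s := by nlinarith [hs.1]
        simp only
        rw [if_pos (by linarith)]
      rw [MeasureTheory.setIntegral_congr_fun measurableSet_Ioo hz,
        MeasureTheory.setIntegral_congr_fun measurableSet_Ico hone,
        MeasureTheory.integral_Ico_eq_integral_Ioo, integral_inv_sq hc0 hc1.le]
      have : (1:ℝ)/c = α/u := by rw [hc, one_div_div]
      simp [this]

/-- for a superuniform `U` with values in `[0,1]`,
`E[sup_{γ ∈ (γ_min,1)} 1{U ≤ αγ}/γ] ≤ α (1 − log γ_min)`. -/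
theorem stmt4 {Ω : Type*} [MeasurableSpace Ω] (μ : Measure Ω) [IsProbabilityMeasure μ]
    (U : Ω → ℝ) (hU : Measurable U)
    (hU01 : ∀ ω, U ω ∈ Set.Icc (0:ℝ) 1)
    (hsuper : ∀ u ∈ Set.Icc (0:ℝ) 1, μ {ω | U ω ≤ u} ≤ ENNReal.ofReal u)
    (α γmin : ℝ) (hα : α ∈ Set.Ioo (0:ℝ) 1) (hγ : γmin ∈ Set.Ioo (0:ℝ) 1) :
    ∫ ω, sSup ((fun γ => (if U ω ≤ α * γ then (1:ℝ) else 0) / γ) '' Set.Ioo γmin 1) ∂μ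
      ≤ α * (1 - Real.log γmin) := by
  obtain ⟨hα0, hα1⟩ := hα
  obtain ⟨hγ0, hγ1⟩ := hγ
  set ν : Measure ℝ := volume.restrict (Set.Ioc γmin 1) with hν
  haveI : IsFiniteMeasure ν := by
    constructor
    rw [hν, Measure.restrict_apply_univ]
    exact measure_Ioc_lt_top
  have hrw : (fun ω => sSup ((fun γ => (if U ω ≤ α * γ then (1:ℝ) else 0) / γ) '' Set.Ioo γmin 1))
      = fun ω => (if U ω < α then (1:ℝ) else 0)
          + ∫ s, (if U ω ≤ α * s then (1:ℝ) else 0)/s^2 ∂ν := by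
    funext ω
    rw [sup_eval ⟨hα0, hα1⟩ ⟨hγ0, hγ1⟩ (U ω), g_eq ⟨hα0, hα1⟩ ⟨hγ0, hγ1⟩ (U ω), hν]
  rw [hrw]
  have hf1meas : MeasurableSet {ω | U ω < α} := measurableSet_lt hU measurable_const
  have hf1eq : (fun ω => if U ω < α then (1:ℝ) else 0)
      = Set.indicator {ω | U ω < α} (fun _ => (1:ℝ)) := by
    funext ω; simp [Set.indicator_apply]
  have hf1int : Integrable (fun ω => if U ω < α then (1:ℝ) else 0) μ := by
    rw [hf1eq]
    exact (integrable_const (1:ℝ)).indicator hf1meas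
  have hpmeas : Measurable (Function.uncurry fun (ω : Ω) (s : ℝ) =>
      (if U ω ≤ α * s then (1:ℝ) else 0)/s^2) := by
    apply Measurable.div
    · exact Measurable.ite
        (measurableSet_le (hU.comp measurable_fst) (measurable_const.mul measurable_snd))
        measurable_const measurable_const
    · exact measurable_snd.pow_const 2
  have Hint : Integrable (Function.uncurry fun (ω : Ω) (s : ℝ) =>
      (if U ω ≤ α * s then (1:ℝ) else 0)/s^2) (μ.prod ν) := by
    have hae : ∀ᵐ p : Ω × ℝ ∂μ.prod ν, p.2 ∈ Set.Ioc γmin 1 := by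
      have hpr : μ.prod ν = (μ.prod volume).restrict (Set.univ ×ˢ Set.Ioc γmin 1) := by
        rw [hν, ← Measure.prod_restrict, Measure.restrict_univ]
      rw [hpr]
      filter_upwards [ae_restrict_mem (MeasurableSet.univ.prod measurableSet_Ioc)] with p hp
      exact hp.2
    apply (integrable_const (γmin⁻¹^2 : ℝ)).mono' hpmeas.aestronglyMeasurable
    filter_upwards [hae] with p hp
    have hs0 : 0 < p.2 := lt_trans hγ0 hp.1
    rw [Function.uncurry, Real.norm_eq_abs, abs_div,
      abs_of_nonneg (by positivity : (0:ℝ) ≤ p.2^2)]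
    have hb1 : |if U p.1 ≤ α * p.2 then (1:ℝ) else 0| ≤ 1 := by split_ifs <;> simp
    calc |if U p.1 ≤ α * p.2 then (1:ℝ) else 0| / p.2^2 ≤ 1 / p.2^2 := by gcongr
      _ ≤ γmin⁻¹^2 := by
          rw [one_div, ← inv_pow]
          gcongr
          exact hp.1.le
  have hf2int : Integrable (fun ω => ∫ s, (if U ω ≤ α * s then (1:ℝ) else 0)/s^2 ∂ν) μ := by
    simpa [Function.uncurry] using Hint.integral_prod_left
  rw [integral_add hf1int hf2int]
  have h1 : ∫ ω, (if U ω < α then (1:ℝ) else 0) ∂μ ≤ α := by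
    rw [hf1eq, integral_indicator_const _ hf1meas]
    simp only [smul_eq_mul, mul_one]
    have hm : μ {ω | U ω < α} ≤ ENNReal.ofReal α :=
      le_trans (measure_mono fun ω (h : U ω < α) => le_of_lt h)
        (hsuper α ⟨le_of_lt hα0, le_of_lt hα1⟩)
    exact ENNReal.toReal_le_of_le_ofReal (le_of_lt hα0) hm
  have hgc : IntegrableOn (fun s : ℝ => α / s) (Set.Ioc γmin 1) := by
    have hcont : ContinuousOn (fun s : ℝ => α / s) (Set.Icc γmin 1) := by
      apply ContinuousOn.div continuousOn_const continuousOn_id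
      intro s hs; exact ne_of_gt (lt_of_lt_of_le hγ0 hs.1)
    exact hcont.integrableOn_Icc.mono_set Set.Ioc_subset_Icc_self
  have h2 : ∫ ω, (∫ s, (if U ω ≤ α * s then (1:ℝ) else 0)/s^2 ∂ν) ∂μ
      ≤ α * (-Real.log γmin) := by
    rw [integral_integral_swap Hint]
    have hA : Integrable (fun s => ∫ ω, (if U ω ≤ α * s then (1:ℝ) else 0)/s^2 ∂μ) ν := by
      simpa [Function.uncurry] using Hint.integral_prod_right
    have hB : Integrable (fun s : ℝ => α / s) ν := by rw [hν]; exact hgc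
    have hmono : ∫ s, (∫ ω, (if U ω ≤ α * s then (1:ℝ) else 0)/s^2 ∂μ) ∂ν
        ≤ ∫ s, α / s ∂ν := by
      apply integral_mono_ae hA hB
      rw [hν]
      filter_upwards [ae_restrict_mem measurableSet_Ioc] with s hs
      have hs0 : 0 < s := lt_trans hγ0 hs.1
      have hval : ∫ ω, (if U ω ≤ α * s then (1:ℝ) else 0)/s^2 ∂μ
          = (μ {ω | U ω ≤ α * s}).toReal / s^2 := by
        rw [integral_div]
        congr 1
        rw [show (fun ω => if U ω ≤ α * s then (1:ℝ) else 0)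
            = Set.indicator {ω | U ω ≤ α * s} (fun _ => (1:ℝ)) from
          funext fun ω => by simp [Set.indicator_apply],
          integral_indicator_const _ (measurableSet_le hU measurable_const)]
        simp [measureReal_def]
      rw [hval]
      have hαs : α * s ∈ Set.Icc (0:ℝ) 1 := ⟨by positivity, by nlinarith [hs.2]⟩
      have hb : (μ {ω | U ω ≤ α * s}).toReal ≤ α * s :=
        ENNReal.toReal_le_of_le_ofReal (by positivity) (hsuper _ hαs)
      calc (μ {ω | U ω ≤ α * s}).toReal / s^2 ≤ (α * s) / s^2 := by gcongr
        _ = α / s := by rw [pow_two, mul_div_mul_right _ _ (ne_of_gt hs0)]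
    have hcomp : ∫ s, α / s ∂ν = α * (-Real.log γmin) := by
      rw [hν]
      simp_rw [div_eq_mul_inv]
      rw [MeasureTheory.integral_const_mul, ← intervalIntegral.integral_of_le hγ1.le,
        integral_inv_of_pos hγ0 one_pos, one_div, Real.log_inv]
    exact hmono.trans (le_of_eq hcomp)
  calc (∫ ω, (if U ω < α then (1:ℝ) else 0) ∂μ)
      + ∫ ω, (∫ s, (if U ω ≤ α * s then (1:ℝ) else 0)/s^2 ∂ν) ∂μ
      ≤ α + α * (-Real.log γmin) := add_le_add h1 h2
    _ = α * (1 - Real.log γmin) := by ring
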